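/- Let g(x) = (x₁ − a)² + (x₂ − b)² − R² with (a,b) ∈ ℝ² and R > 0, and let q ∈ ℝ[x₁,x₂] vanish on a nonempty open arc of the circle {x ∈ ℝ² : g(x) = 0}. Then g divides q in ℝ[x₁,x₂]. -/

import Mathlib

open MvPolynomial

noncomputable def phiF : MvPolynomial (Fin 1) ℝ →ₐ[ℝ] Polynomial ℝ :=
  MvPolynomial.aeval (fun _ : Fin 1 => (Polynomial.X : Polynomial ℝ))

lemma phiF_inj : Function.Injective phiF := by
  have h : (Polynomial.aeval (X 0 : MvPolynomial (Fin 1) ℝ)).comp phiF = AlgHom.id ℝ _ := by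
    apply MvPolynomial.algHom_ext
    intro i
    simp [phiF, Fin.eq_zero i]
  intro p q hpq
  have := congrArg (Polynomial.aeval (X 0 : MvPolynomial (Fin 1) ℝ)) hpq
  calc p = (Polynomial.aeval (X 0 : MvPolynomial (Fin 1) ℝ)).comp phiF p := by rw [h]; rfl
    _ = (Polynomial.aeval (X 0 : MvPolynomial (Fin 1) ℝ)).comp phiF q := this
    _ = q := by rw [h]; rfl

lemma eval_phiF (p : MvPolynomial (Fin 1) ℝ) (t : ℝ) :
    Polynomial.eval t (phiF p) = MvPolynomial.eval ![t] p := by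
  have h : (Polynomial.aeval t : Polynomial ℝ →ₐ[ℝ] ℝ).comp phiF
      = MvPolynomial.aeval (![t] : Fin 1 → ℝ) := by
    apply MvPolynomial.algHom_ext
    intro i
    simp [phiF, Fin.eq_zero i]
  have h2 := congrFun (congrArg (fun f : MvPolynomial (Fin 1) ℝ →ₐ[ℝ] ℝ => (f : MvPolynomial (Fin 1) ℝ → ℝ)) h) p
  simp only [AlgHom.coe_comp, Function.comp_apply] at h2
  rw [← MvPolynomial.coe_aeval_eq_eval, ← Polynomial.coe_aeval_eq_eval]
  exact_mod_cast h2

lemma zero_of_eval_zero_on (p : MvPolynomial (Fin 1) ℝ) (S : Set ℝ) (hS : S.Infinite)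
    (h : ∀ t ∈ S, MvPolynomial.eval ![t] p = 0) : p = 0 := by
  have hphi : phiF p = 0 := by
    apply Polynomial.eq_zero_of_infinite_isRoot
    apply hS.mono
    intro t ht
    simp only [Set.mem_setOf_eq, Polynomial.IsRoot, eval_phiF]
    exact h t ht
  exact phiF_inj (by simpa using hphi)

/-- `g(x) = (x₁ - a)² + (x₂ - b)² - R²`. -/
noncomputable def gHole (a b R : ℝ) : MvPolynomial (Fin 2) ℝ :=
  (X 0 - C a) ^ 2 + (X 1 - C b) ^ 2 - C R ^ 2

lemma G_eq (a b R : ℝ) : finSuccEquiv ℝ 1 (gHole a b R) =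
    Polynomial.X ^ 2 + (Polynomial.C (C (-(2*a))) * Polynomial.X
      + Polynomial.C ((C a)^2 + (X 0 - C b)^2 - (C R)^2)) := by
  have h1 : (1 : Fin 2) = Fin.succ 0 := rfl
  simp only [gHole, h1, map_sub, map_add, map_pow, finSuccEquiv_X_zero, finSuccEquiv_X_succ]
  have hC : ∀ r : ℝ, finSuccEquiv ℝ 1 (C r) = Polynomial.C (C r) := fun r => by
    simp [finSuccEquiv_apply]
  rw [hC a, hC b, hC R]
  have h2 : (Polynomial.C (C (2:ℝ)) : Polynomial (MvPolynomial (Fin 1) ℝ)) = 2 := by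
    rw [map_ofNat, map_ofNat]
  push_cast [map_sub, map_add, map_pow, map_mul, map_neg, h2]
  ring

lemma G_monic (a b R : ℝ) : (finSuccEquiv ℝ 1 (gHole a b R)).Monic := by
  rw [G_eq]
  exact Polynomial.monic_X_pow_add Polynomial.degree_linear_lt

lemma G_deg (a b R : ℝ) : (finSuccEquiv ℝ 1 (gHole a b R)).degree = 2 := by
  rw [G_eq]
  rw [Polynomial.degree_add_eq_left_of_degree_lt]
  · exact Polynomial.degree_X_pow 2
  · rw [Polynomial.degree_X_pow]
    exact Polynomial.degree_linear_lt

lemma Rm_natDegree_le (a b R : ℝ) (P : Polynomial (MvPolynomial (Fin 1) ℝ)) :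
    (P %ₘ finSuccEquiv ℝ 1 (gHole a b R)).natDegree ≤ 1 := by
  set Rm := P %ₘ finSuccEquiv ℝ 1 (gHole a b R) with hRm
  by_cases h0 : Rm = 0
  · simp [h0]
  · have hlt := Polynomial.degree_modByMonic_lt P (G_monic a b R)
    rw [G_deg, ← hRm] at hlt
    have hlt2 : Rm.degree < ((2:ℕ) : WithBot ℕ) := by exact_mod_cast hlt
    have := (Polynomial.natDegree_lt_iff_degree_lt h0).mpr hlt2
    omega

lemma point_eval (a b R : ℝ) (q : MvPolynomial (Fin 2) ℝ) (u v : ℝ)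
    (hg : (u - a)^2 + (v - b)^2 = R^2)
    (hq : MvPolynomial.eval (Fin.cons u ![v]) q = 0) :
    MvPolynomial.eval ![v] ((finSuccEquiv ℝ 1 q %ₘ finSuccEquiv ℝ 1 (gHole a b R)).coeff 1) * u
      + MvPolynomial.eval ![v] ((finSuccEquiv ℝ 1 q %ₘ finSuccEquiv ℝ 1 (gHole a b R)).coeff 0)
        = 0 := by
  set G := finSuccEquiv ℝ 1 (gHole a b R) with hGdef
  set P := finSuccEquiv ℝ 1 q with hPdef
  set Rm := P %ₘ G with hRmdef
  have hmod : Rm + G * (P /ₘ G) = P := Polynomial.modByMonic_add_div P G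
  have hRm : Rm = Polynomial.C (Rm.coeff 1) * Polynomial.X + Polynomial.C (Rm.coeff 0) :=
    Polynomial.eq_X_add_C_of_natDegree_le_one (Rm_natDegree_le a b R P)
  have hgz : Polynomial.eval u (G.map (MvPolynomial.eval ![v])) = 0 := by
    rw [hGdef, ← eval_eq_eval_mv_eval']
    have h1 : (1 : Fin 2) = Fin.succ 0 := rfl
    simp only [gHole, map_sub, map_add, map_pow, eval_X, eval_C, h1, Fin.cons_succ,
      Fin.cons_zero, Matrix.cons_val_fin_one]
    linarith [hg]
  have hq' : Polynomial.eval u (P.map (MvPolynomial.eval ![v])) = 0 := by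
    rw [hPdef, ← eval_eq_eval_mv_eval']
    exact hq
  rw [← hmod] at hq'
  rw [Polynomial.map_add, Polynomial.map_mul, Polynomial.eval_add, Polynomial.eval_mul,
    hgz, zero_mul, add_zero] at hq'
  rw [hRm] at hq'
  simpa using hq'

lemma key (a b R : ℝ) (hR : 0 < R) (q : MvPolynomial (Fin 2) ℝ)
    (x₀ : EuclideanSpace ℝ (Fin 2)) (hx : (x₀ 0 - a)^2 + (x₀ 1 - b)^2 = R^2)
    (h0 : x₀ 0 ≠ a)
    (ε : ℝ) (hε : 0 < ε)
    (hvan : ∀ y : EuclideanSpace ℝ (Fin 2), dist y x₀ < ε →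
      eval (fun i => y i) (gHole a b R) = 0 → eval (fun i => y i) q = 0) :
    gHole a b R ∣ q := by
  classical
  set u₀ := x₀ 0 with hu₀def
  set v₀ := x₀ 1 with hv₀def
  -- scalar form of the vanishing hypothesis
  have hvanS : ∀ u v : ℝ, (u - a)^2 + (v - b)^2 = R^2 →
      (u - u₀)^2 + (v - v₀)^2 < ε^2 → MvPolynomial.eval (Fin.cons u ![v]) q = 0 := by
    intro u v hcirc hd
    set y : EuclideanSpace ℝ (Fin 2) := (WithLp.equiv 2 (Fin 2 → ℝ)).symm ![u, v] with hy
    have hyc : (fun i => y i) = Fin.cons u ![v] := by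
      funext i
      fin_cases i <;> rfl
    have hdist : dist y x₀ < ε := by
      rw [EuclideanSpace.dist_eq, Fin.sum_univ_two]
      have h0' : y 0 = u := rfl
      have h1' : y 1 = v := rfl
      rw [h0', h1', Real.dist_eq, Real.dist_eq, sq_abs, sq_abs]
      exact (Real.sqrt_lt' hε).mpr hd
    have hgy : MvPolynomial.eval (fun i => y i) (gHole a b R) = 0 := by
      rw [hyc]
      have h1 : (1 : Fin 2) = Fin.succ 0 := rfl
      simp only [gHole, map_sub, map_add, map_pow, eval_X, eval_C, h1, Fin.cons_succ,
        Fin.cons_zero, Matrix.cons_val_fin_one]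
      linarith [hcirc]
    have := hvan y hdist hgy
    rwa [hyc] at this
  -- sign and basic geometry
  set s : ℝ := if 0 ≤ u₀ - a then 1 else -1 with hsdef
  have hs : s = 1 ∨ s = -1 := by
    rw [hsdef]; split_ifs <;> simp
  have hs2 : s^2 = 1 := by rcases hs with h | h <;> rw [h] <;> norm_num
  set w₀ := Real.sqrt (R^2 - (v₀ - b)^2) with hw₀def
  have hw0sq : R^2 - (v₀ - b)^2 = (u₀ - a)^2 := by linarith
  have hw0 : w₀ = |u₀ - a| := by rw [hw₀def, hw0sq, Real.sqrt_sq_eq_abs]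
  have hu0 : a + s * w₀ = u₀ := by
    rw [hw0, hsdef]
    split_ifs with h
    · rw [abs_of_nonneg h]; ring
    · rw [abs_of_neg (not_le.mp h)]; ring
  have hne : u₀ - a ≠ 0 := sub_ne_zero.mpr h0
  have hsqpos : 0 < (u₀ - a)^2 := lt_of_le_of_ne (sq_nonneg _) (Ne.symm (pow_ne_zero 2 hne))
  have hvb : (v₀ - b)^2 < R^2 := by linarith
  have habs : |v₀ - b| < R := by
    rw [← Real.sqrt_sq_eq_abs, ← Real.sqrt_sq hR.le]
    exact Real.sqrt_lt_sqrt (sq_nonneg _) hvb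
  have habs' := abs_lt.mp habs
  -- continuity: find δ
  have hcont : ContinuousAt
      (fun v => (a + s * Real.sqrt (R^2 - (v - b)^2) - u₀)^2 + (v - v₀)^2) v₀ := by
    fun_prop
  have hfv0 : (a + s * Real.sqrt (R^2 - (v₀ - b)^2) - u₀)^2 + (v₀ - v₀)^2 = 0 := by
    rw [← hw₀def, hu0]; ring
  have hev : ∀ᶠ v in nhds v₀,
      (a + s * Real.sqrt (R^2 - (v - b)^2) - u₀)^2 + (v - v₀)^2 < ε^2 := by
    have ht : Filter.Tendsto
        (fun v => (a + s * Real.sqrt (R^2 - (v - b)^2) - u₀)^2 + (v - v₀)^2)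
        (nhds v₀) (nhds 0) := by
      have := hcont.tendsto
      rwa [hfv0] at this
    exact ht.eventually_lt_const (by positivity)
  obtain ⟨δ, hδpos, hδf⟩ := Metric.eventually_nhds_iff.mp hev
  set δ' := min δ (min (v₀ - (b - R)) (b + R - v₀)) with hδ'def
  have hδ'pos : 0 < δ' := by
    apply lt_min hδpos
    apply lt_min <;> linarith
  set J := Set.Ioo (v₀ - δ') (v₀ + δ') with hJdef
  have hJinf : J.Infinite := Set.Ioo_infinite (by linarith)
  set Rm := finSuccEquiv ℝ 1 q %ₘ finSuccEquiv ℝ 1 (gHole a b R) with hRmdef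
  set r1 := Rm.coeff 1 with hr1def
  set r0 := Rm.coeff 0 with hr0def
  -- the basic evaluation identity on J
  have hE : ∀ v ∈ J, MvPolynomial.eval ![v] r1 * (a + s * Real.sqrt (R^2 - (v - b)^2))
      + MvPolynomial.eval ![v] r0 = 0 := by
    intro v hv
    obtain ⟨hv1, hv2⟩ := hv
    have hd1 : δ' ≤ δ := min_le_left _ _
    have hd2 : δ' ≤ v₀ - (b - R) := le_trans (min_le_right _ _) (min_le_left _ _)
    have hd3 : δ' ≤ b + R - v₀ := le_trans (min_le_right _ _) (min_le_right _ _)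
    have hvR : (v - b)^2 ≤ R^2 := sq_le_sq' (by linarith) (by linarith)
    set w := Real.sqrt (R^2 - (v - b)^2) with hwdef
    have hw2 : w^2 = R^2 - (v - b)^2 := Real.sq_sqrt (by linarith)
    have hcircv : (a + s * w - a)^2 + (v - b)^2 = R^2 := by
      have h1 : (a + s * w - a)^2 = s^2 * w^2 := by ring
      rw [h1, hs2, one_mul, hw2]; ring
    have hdd : (a + s * w - u₀)^2 + (v - v₀)^2 < ε^2 := by
      apply hδf
      rw [Real.dist_eq, abs_lt]
      constructor <;> linarith
    exact point_eval a b R q (a + s * w) v hcircv (hvanS (a + s * w) v hcircv hdd)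
  -- now deduce r1 = 0
  have hr1 : r1 = 0 := by
    set A := phiF r1 with hAdef
    set B := phiF r0 with hBdef
    set Q : Polynomial ℝ := Polynomial.C (R^2) - (Polynomial.X - Polynomial.C b)^2 with hQdef
    have hD : (B + Polynomial.C a * A)^2 - A^2 * Q = 0 := by
      apply Polynomial.eq_zero_of_infinite_isRoot
      apply hJinf.mono
      intro v hv
      obtain ⟨hv1, hv2⟩ := hv
      have hd2 : δ' ≤ v₀ - (b - R) := le_trans (min_le_right _ _) (min_le_left _ _)
      have hd3 : δ' ≤ b + R - v₀ := le_trans (min_le_right _ _) (min_le_right _ _)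
      have hvR : (v - b)^2 ≤ R^2 := sq_le_sq' (by linarith) (by linarith)
      set w := Real.sqrt (R^2 - (v - b)^2) with hwdef
      have hw2 : w^2 = R^2 - (v - b)^2 := Real.sq_sqrt (by linarith)
      have hEv := hE v ⟨hv1, hv2⟩
      rw [← hwdef] at hEv
      simp only [Set.mem_setOf_eq, Polynomial.IsRoot, hQdef, Polynomial.eval_sub,
        Polynomial.eval_add, Polynomial.eval_mul, Polynomial.eval_pow, Polynomial.eval_C,
        Polynomial.eval_X, hAdef, hBdef, eval_phiF]
      linear_combination (MvPolynomial.eval ![v] r0 + a * MvPolynomial.eval ![v] r1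
          - MvPolynomial.eval ![v] r1 * s * w) * hEv
        + (MvPolynomial.eval ![v] r1)^2 * w^2 * hs2 + (MvPolynomial.eval ![v] r1)^2 * hw2
    by_contra hA
    have hA' : A ≠ 0 := fun h => hA (phiF_inj (by simpa [hAdef] using h))
    have hQeq : Q = Polynomial.C (-1) * Polynomial.X^2 + Polynomial.C (2*b) * Polynomial.X
        + Polynomial.C (R^2 - b^2) := by
      rw [hQdef]
      push_cast [map_sub, map_mul, map_neg, map_ofNat, Polynomial.C_1, map_one, map_pow]
      ring
    have hQlc : Q.leadingCoeff = -1 := by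
      rw [hQeq, Polynomial.leadingCoeff_quadratic (by norm_num : (-1:ℝ) ≠ 0)]
    have hQne : Q ≠ 0 := fun h => by simp [h] at hQlc
    have h1 : (B + Polynomial.C a * A)^2 = A^2 * Q := by
      have := sub_eq_zero.mp hD
      exact this
    have hlc := congrArg Polynomial.leadingCoeff h1
    rw [Polynomial.leadingCoeff_pow, Polynomial.leadingCoeff_mul, Polynomial.leadingCoeff_pow,
      hQlc] at hlc
    have hAlc : A.leadingCoeff ≠ 0 := Polynomial.leadingCoeff_ne_zero.mpr hA'
    have hAlcpos : 0 < A.leadingCoeff^2 :=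
      lt_of_le_of_ne (sq_nonneg _) (Ne.symm (pow_ne_zero 2 hAlc))
    nlinarith [sq_nonneg ((B + Polynomial.C a * A).leadingCoeff), hlc, hAlcpos]
  have hr0 : r0 = 0 := by
    apply zero_of_eval_zero_on r0 J hJinf
    intro v hv
    have hEv := hE v hv
    rw [hr1, map_zero, zero_mul, zero_add] at hEv
    exact hEv
  have hRm0 : Rm = 0 := by
    have := Polynomial.eq_X_add_C_of_natDegree_le_one
      (Rm_natDegree_le a b R (finSuccEquiv ℝ 1 q))
    rw [← hRmdef, ← hr1def, ← hr0def, hr1, hr0] at this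
    simpa using this
  have hdvd : finSuccEquiv ℝ 1 (gHole a b R) ∣ finSuccEquiv ℝ 1 q :=
    (Polynomial.modByMonic_eq_zero_iff_dvd (G_monic a b R)).mp hRm0
  have := map_dvd (finSuccEquiv ℝ 1).symm hdvd
  simpa using this

theorem stmt18 (a b R : ℝ) (hR : 0 < R) (q : MvPolynomial (Fin 2) ℝ)
    (x₀ : EuclideanSpace ℝ (Fin 2)) (hx₀ : eval (fun i => x₀ i) (gHole a b R) = 0)
    (ε : ℝ) (hε : 0 < ε)
    (hvan : ∀ y : EuclideanSpace ℝ (Fin 2), dist y x₀ < ε →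
      eval (fun i => y i) (gHole a b R) = 0 → eval (fun i => y i) q = 0) :
    gHole a b R ∣ q := by
  have hx : (x₀ 0 - a)^2 + (x₀ 1 - b)^2 = R^2 := by
    simp only [gHole, map_sub, map_add, map_pow, eval_X, eval_C] at hx₀
    linarith
  by_cases h0 : x₀ 0 ≠ a
  · exact key a b R hR q x₀ hx h0 ε hε hvan
  · push_neg at h0
    have hv : (x₀ 1 - b)^2 = R^2 := by
      rw [h0] at hx; nlinarith [hx]
    set σ := (x₀ 1 - b)/R with hσdef
    have hσ : x₀ 1 - b = σ * R := by rw [hσdef, div_mul_cancel₀ _ hR.ne']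
    have hσ2 : σ^2 = 1 := by
      rw [hσdef, div_pow, hv, div_self (by positivity)]
    set η := min R (ε^2/(16*R)) with hηdef
    have hηpos : 0 < η := lt_min hR (by positivity)
    have hηR : η ≤ R := min_le_left _ _
    have hηε : 2*R*η ≤ ε^2/8 := by
      have h1 : η ≤ ε^2/(16*R) := min_le_right _ _
      calc 2*R*η ≤ 2*R*(ε^2/(16*R)) := by nlinarith
        _ = ε^2/8 := by field_simp; ring
    have hpos : 0 < 2*R*η - η^2 := by nlinarith
    set u₁ := a + Real.sqrt (2*R*η - η^2) with hu₁def
    set v₁ := b + σ*(R - η) with hv₁def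
    have hu₁sq : (u₁ - a)^2 = 2*R*η - η^2 := by
      rw [hu₁def]
      linear_combination Real.sq_sqrt hpos.le
    have hcirc1 : (u₁ - a)^2 + (v₁ - b)^2 = R^2 := by
      rw [hu₁sq, hv₁def]
      have h2 : (b + σ*(R - η) - b)^2 = σ^2*(R - η)^2 := by ring
      rw [h2, hσ2]; ring
    have hu₁ne : u₁ ≠ a := by
      rw [hu₁def]
      have : 0 < Real.sqrt (2*R*η - η^2) := Real.sqrt_pos.mpr hpos
      intro h; linarith [this, (by linarith [h] : a + Real.sqrt (2*R*η - η^2) - a = 0)]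
    set x₁ : EuclideanSpace ℝ (Fin 2) := (WithLp.equiv 2 (Fin 2 → ℝ)).symm ![u₁, v₁] with hx₁def
    have hx₁0 : x₁ 0 = u₁ := rfl
    have hx₁1 : x₁ 1 = v₁ := rfl
    have hdist : dist x₁ x₀ < ε/2 := by
      rw [EuclideanSpace.dist_eq, Fin.sum_univ_two, hx₁0, hx₁1, Real.dist_eq, Real.dist_eq,
        sq_abs, sq_abs]
      apply (Real.sqrt_lt' (by positivity)).mpr
      have h3 : v₁ - x₀ 1 = -σ*η := by
        have : x₀ 1 = b + σ * R := by linarith [hσ]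
        rw [hv₁def, this]; ring
      have h4 : (v₁ - x₀ 1)^2 = η^2 := by
        rw [h3]
        have : (-σ*η)^2 = σ^2 * η^2 := by ring
        rw [this, hσ2]; ring
      have h5 : (u₁ - x₀ 0)^2 = 2*R*η - η^2 := by rw [h0]; exact hu₁sq
      rw [h4, h5]
      nlinarith [hε]
    apply key a b R hR q x₁ (by rw [hx₁0, hx₁1]; exact hcirc1) (by rw [hx₁0]; exact hu₁ne)
      (ε/2) (by positivity)
    intro y hy hgy
    exact hvan y (lt_of_le_of_lt (dist_triangle y x₁ x₀) (by linarith [hy, hdist])) hgy
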